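/- Every symmetric g×g integer matrix B is an integer linear combination of matrices of the following two types: (1) matrices E_k^± with (k,k)-entry ±1 and all other entries 0; (2) matrices F_{kl}^± (for k ≠ l) with (k,k)- and (l,l)-entries equal to −1, (k,l)- and (l,k)-entries equal to ∓1, and all other entries 0. -/

import Mathlib

/-- Every symmetric `g × g` integer matrix is an integer linear combination of
(1) matrices `E_k^±` with `(k,k)`-entry `±1` and all other entries `0`, and
(2) matrices `F_{kl}^±` (`k ≠ l`) with `(k,k)`- and `(l,l)`-entries `−1`,
`(k,l)`- and `(l,k)`-entries `∓1`, and all other entries `0`. -/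
theorem symmetric_matrix_spanned_by_twist_matrices (g : ℕ)
    (B : Matrix (Fin g) (Fin g) ℤ) (hB : B.IsSymm) :
    B ∈ Submodule.span ℤ
      ({A | ∃ (k : Fin g) (ε : ℤ), (ε = 1 ∨ ε = -1) ∧
          A = Matrix.single k k ε} ∪
       {A | ∃ (k l : Fin g) (ε : ℤ), k ≠ l ∧ (ε = 1 ∨ ε = -1) ∧
          A = -(Matrix.single k k (1 : ℤ)) - Matrix.single l l 1
              - (Matrix.single k l ε + Matrix.single l k ε)} :
        Set (Matrix (Fin g) (Fin g) ℤ)) := by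
  set T := Submodule.span ℤ
      ({A | ∃ (k : Fin g) (ε : ℤ), (ε = 1 ∨ ε = -1) ∧
          A = Matrix.single k k ε} ∪
       {A | ∃ (k l : Fin g) (ε : ℤ), k ≠ l ∧ (ε = 1 ∨ ε = -1) ∧
          A = -(Matrix.single k k (1 : ℤ)) - Matrix.single l l 1
              - (Matrix.single k l ε + Matrix.single l k ε)} :
        Set (Matrix (Fin g) (Fin g) ℤ)) with hT
  have h1 : ∀ k : Fin g, Matrix.single k k (1 : ℤ) ∈ T := fun k =>
    Submodule.subset_span (Or.inl ⟨k, 1, Or.inl rfl, rfl⟩)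
  have h2 : ∀ k l : Fin g, k ≠ l →
      Matrix.single k l (1 : ℤ) + Matrix.single l k 1 ∈ T := by
    intro k l hkl
    have hF : -(Matrix.single k k (1 : ℤ)) - Matrix.single l l 1
        - (Matrix.single k l 1 + Matrix.single l k 1) ∈ T :=
      Submodule.subset_span (Or.inr ⟨k, l, 1, hkl, Or.inl rfl, rfl⟩)
    have heq : Matrix.single k l (1 : ℤ) + Matrix.single l k 1 =
        -(-(Matrix.single k k (1 : ℤ)) - Matrix.single l l 1
          - (Matrix.single k l 1 + Matrix.single l k 1))
        - Matrix.single k k 1 - Matrix.single l l 1 := by abel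
    rw [heq]
    exact T.sub_mem (T.sub_mem (T.neg_mem hF) (h1 k)) (h1 l)
  have key : B = (∑ k, (B k k) • Matrix.single k k (1 : ℤ)) +
      ∑ p ∈ Finset.univ.filter (fun p : Fin g × Fin g => p.1 < p.2),
        (B p.1 p.2) • (Matrix.single p.1 p.2 (1 : ℤ)
          + Matrix.single p.2 p.1 1) := by
    ext i j
    simp only [Matrix.add_apply, Matrix.sum_apply, Matrix.smul_apply,
      Matrix.single, Matrix.of_apply, smul_eq_mul]
    rcases lt_trichotomy i j with h | h | h
    · rw [Finset.sum_eq_zero, Finset.sum_eq_single (i, j)]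
      · simp [h.ne, h]
      · rintro ⟨a, b⟩ hab hne
        simp only [Finset.mem_filter, Finset.mem_univ, true_and] at hab
        have h1 : ¬(a = i ∧ b = j) := fun ⟨ha, hb⟩ => hne (by simp [ha, hb])
        have h2 : ¬(b = i ∧ a = j) := fun ⟨hb, ha⟩ =>
          absurd (ha ▸ hb ▸ hab) (not_lt.2 h.le)
        simp [h1, h2]
      · simp [h]
      · intro k _
        have : ¬(k = i ∧ k = j) := fun ⟨ha, hb⟩ => h.ne (ha ▸ hb ▸ rfl)
        simp [this]
    · subst h
      rw [Finset.sum_eq_single i, Finset.sum_eq_zero]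
      · simp
      · rintro ⟨a, b⟩ hab
        simp only [Finset.mem_filter, Finset.mem_univ, true_and] at hab
        have h1 : ¬(a = i ∧ b = i) := fun ⟨ha, hb⟩ => hab.ne (ha.trans hb.symm)
        have h2 : ¬(b = i ∧ a = i) := fun ⟨hb, ha⟩ => hab.ne (ha.trans hb.symm)
        simp [h1, h2]
      · intro k _ hk; simp [hk]
      · simp
    · rw [Finset.sum_eq_zero, Finset.sum_eq_single (j, i)]
      · have : B j i = B i j := hB.apply i j
        simp [h.ne, h, this]
      · rintro ⟨a, b⟩ hab hne
        simp only [Finset.mem_filter, Finset.mem_univ, true_and] at hab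
        have h1 : ¬(a = i ∧ b = j) := fun ⟨ha, hb⟩ => absurd (ha ▸ hb ▸ hab) (not_lt.2 h.le)
        have h2 : ¬(b = i ∧ a = j) := fun ⟨hb, ha⟩ => hne (by simp [ha, hb])
        simp [h1, h2]
      · simp [h]
      · intro k _
        have : ¬(k = i ∧ k = j) := fun ⟨ha, hb⟩ => h.ne (hb ▸ ha ▸ rfl)
        simp [this]
  rw [key]
  refine T.add_mem (Submodule.sum_mem _ fun k _ => T.smul_mem _ (h1 k))
    (Submodule.sum_mem _ fun p hp => T.smul_mem _ ?_)
  simp only [Finset.mem_filter, Finset.mem_univ, true_and] at hp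
  exact h2 p.1 p.2 hp.ne
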